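/- Let V = B(v, r) ⊆ ℝᵈ be an open ball, Λ ⊆ V with ε = δ_H(Λ, B(v,r)), and ψ : Λ → Q isotonic with Q bounded. Then there is C proportional to diam(Q)/r such that for all x, x' ∈ Λ ∩ B(v, 3r/4), all x†, x‡ ∈ Λ, and all η ∈ (0, r/4 - 2ε): if |‖x - x'‖ - ‖x† - x‡‖| ≤ η, then |‖ψ(x) - ψ(x')‖ - ‖ψ(x†) - ψ(x‡)‖| ≤ C(η + ε). -/

import Mathlib

open MeasureTheory Metric
open scoped ENNReal

set_option maxHeartbeats 2000000


lemma stmt19_lip (d : ℕ) (hd : 0 < d) (v : EuclideanSpace ℝ (Fin d)) (r ε s : ℝ)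
    (Λ Q : Set (EuclideanSpace ℝ (Fin d)))
    (ψ : EuclideanSpace ℝ (Fin d) → EuclideanSpace ℝ (Fin d))
    (hr : 0 < r) (hε : 0 ≤ ε)
    (hcov : ∀ y ∈ Metric.ball v r, ∃ x ∈ Λ, dist y x ≤ ε)
    (hQb : Bornology.IsBounded Q) (hψQ : ∀ x ∈ Λ, ψ x ∈ Q)
    (hiso : ∀ a ∈ Λ, ∀ b ∈ Λ, ∀ a' ∈ Λ, ∀ b' ∈ Λ,
      ‖a - b‖ < ‖a' - b'‖ → ‖ψ a - ψ b‖ ≤ ‖ψ a' - ψ b'‖)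
    (p q : EuclideanSpace ℝ (Fin d)) (hp : p ∈ Λ) (hq : q ∈ Λ)
    (hs : 0 < s) (hpq : dist p q < 2*s - 2*ε) :
    dist (ψ p) (ψ q) ≤ 32 * ((d:ℝ)+1) * Metric.diam Q * s / r := by
  have hD0 : 0 ≤ Metric.diam Q := Metric.diam_nonneg
  set D := Metric.diam Q with hD
  have hθD : dist (ψ p) (ψ q) ≤ D := Metric.dist_le_diam_of_mem hQb (hψQ p hp) (hψQ q hq)
  set θ := dist (ψ p) (ψ q) with hθ
  have hθ0 : 0 ≤ θ := dist_nonneg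
  have hd1 : (1:ℝ) ≤ (d:ℝ) + 1 := by
    have := Nat.cast_nonneg (α := ℝ) d; linarith
  by_cases hcase : r < 16 * s * ((d:ℝ)+1)
  · rw [le_div_iff₀ hr]
    nlinarith [mul_le_mul_of_nonneg_left (le_of_lt hcase) hD0, mul_le_mul_of_nonneg_right hθD hr.le]
  push_neg at hcase
  set m := Nat.floor (r / (4*s*((d:ℝ)+1))) with hm
  have hden : (0:ℝ) < 4*s*((d:ℝ)+1) := by positivity
  have hm4 : 4 ≤ m := by
    apply Nat.le_floor
    rw [Nat.cast_ofNat, le_div_iff₀ hden]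
    nlinarith
  have hm4' : (4:ℝ) ≤ (m:ℝ) := by exact_mod_cast hm4
  have hmle : 4*s*((d:ℝ)+1)*(m:ℝ) ≤ r := by
    have h1 : (m:ℝ) ≤ r / (4*s*((d:ℝ)+1)) := Nat.floor_le (by positivity)
    rw [le_div_iff₀ hden] at h1; linarith
  have hmge : r ≤ 8*s*((d:ℝ)+1)*(m:ℝ) := by
    have h1 : r / (4*s*((d:ℝ)+1)) < (m:ℝ)+1 := Nat.lt_floor_add_one _
    rw [div_lt_iff₀ hden] at h1; nlinarith
  rcases eq_or_lt_of_le hθ0 with hθz | hθpos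
  · rw [← hθz]; positivity
  -- the grid
  haveI : NeZero m := ⟨by omega⟩
  set y : (Fin d → Fin m) → EuclideanSpace ℝ (Fin d) :=
    fun k => (WithLp.equiv 2 (Fin d → ℝ)).symm (fun i => v i + 2*s*(k i)) with hy
  have hyapp : ∀ (k : Fin d → Fin m) (i : Fin d), y k i = v i + 2*s*(k i) := fun k i => rfl
  have hymem : ∀ k, y k ∈ Metric.ball v r := by
    intro k
    rw [mem_ball, EuclideanSpace.dist_eq]
    have hbound : ∀ i ∈ Finset.univ, dist (y k i) (v i) ^ 2 ≤ (2*s*m)^2 := by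
      intro i _
      rw [hyapp, Real.dist_eq]
      have h1 : (0:ℝ) ≤ (k i : ℝ) := by positivity
      have h2 : ((k i : ℕ) : ℝ) ≤ (m:ℝ) := by exact_mod_cast ((k i).is_lt).le
      have h3 : |v i + 2*s*(k i) - v i| = 2*s*(k i) := by
        rw [show v i + 2*s*((k i : ℕ):ℝ) - v i = 2*s*((k i : ℕ):ℝ) by ring]
        exact abs_of_nonneg (by positivity)
      have h6 : 2*s*((k i : ℕ):ℝ) ≤ 2*s*(m:ℝ) := by nlinarith
      rw [h3]
      exact pow_le_pow_left₀ (by positivity) h6 2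
    have h4 : Real.sqrt (∑ i, dist (y k i) (v i) ^ 2) ≤ Real.sqrt ((d:ℝ) * (2*s*m)^2) := by
      apply Real.sqrt_le_sqrt
      calc ∑ i, dist (y k i) (v i) ^ 2 ≤ ∑ _i : Fin d, (2*s*m)^2 := Finset.sum_le_sum hbound
      _ = (d:ℝ) * (2*s*m)^2 := by rw [Finset.sum_const, Finset.card_univ, Fintype.card_fin, nsmul_eq_mul]
    have h5 : Real.sqrt ((d:ℝ) * (2*s*m)^2) ≤ (((d:ℝ)+1) * (2*s*m)) := by
      rw [show (((d:ℝ)+1) * (2*s*m)) = Real.sqrt ((((d:ℝ)+1) * (2*s*m))^2) by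
        rw [Real.sqrt_sq (by positivity)]]
      apply Real.sqrt_le_sqrt; nlinarith [sq_nonneg (2*s*(m:ℝ))]
    nlinarith
  choose w hwΛ hwd using fun k => hcov (y k) (hymem k)
  have hylow : ∀ k k', k ≠ k' → 2*s ≤ dist (y k) (y k') := by
    intro k k' hne
    obtain ⟨i, hi⟩ := Function.ne_iff.mp hne
    rw [EuclideanSpace.dist_eq, Real.le_sqrt (by positivity) (Finset.sum_nonneg fun j _ => sq_nonneg _)]
    calc (2*s)^2 ≤ dist (y k i) (y k' i)^2 := by
          rw [hyapp, hyapp, Real.dist_eq]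
          have h1 : (1:ℝ) ≤ |((k i : ℕ) : ℝ) - ((k' i : ℕ) : ℝ)| := by
            have hne2 : ((k i : ℕ) : ℤ) - ((k' i : ℕ) : ℤ) ≠ 0 := by
              intro h
              exact hi (Fin.ext (by omega))
            have := Int.one_le_abs hne2
            rw [show ((k i : ℕ) : ℝ) - ((k' i : ℕ) : ℝ)
                  = (((k i : ℕ) : ℤ) - ((k' i : ℕ) : ℤ) : ℤ) by push_cast; ring,
                ← Int.cast_abs]
            exact_mod_cast this
          have h2 : |v i + 2*s*(k i) - (v i + 2*s*(k' i))|
              = 2*s*|((k i : ℕ):ℝ) - ((k' i : ℕ):ℝ)| := by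
            rw [show v i + 2*s*((k i:ℕ):ℝ) - (v i + 2*s*((k' i:ℕ):ℝ))
                  = 2*s*(((k i:ℕ):ℝ) - ((k' i:ℕ):ℝ)) by ring, abs_mul,
                abs_of_nonneg (by positivity)]
          rw [h2]
          have habs : (0:ℝ) ≤ |((k i : ℕ):ℝ) - ((k' i : ℕ):ℝ)| := abs_nonneg _
          nlinarith [mul_le_mul h1 h1 (by norm_num) habs, sq_nonneg s, hs]
      _ ≤ ∑ j, dist (y k j) (y k' j)^2 :=
          Finset.single_le_sum (f := fun j => dist (y k j) (y k' j)^2)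
            (fun j _ => sq_nonneg _) (Finset.mem_univ i)
  have hwsep : ∀ k k', k ≠ k' → θ ≤ dist (ψ (w k)) (ψ (w k')) := by
    intro k k' hne
    have h1 : 2*s - 2*ε ≤ dist (w k) (w k') := by
      have t4 := dist_triangle4 (y k) (w k) (w k') (y k')
      have h5 : dist (w k') (y k') ≤ ε := by rw [dist_comm]; exact hwd k'
      have := hylow k k' hne
      linarith [hwd k]
    have h2 : ‖p - q‖ < ‖w k - w k'‖ := by
      rw [← dist_eq_norm, ← dist_eq_norm]; linarith
    have := hiso p hp q hq (w k) (hwΛ k) (w k') (hwΛ k') h2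
    rw [← dist_eq_norm, ← dist_eq_norm] at this
    exact this
  -- packing
  haveI : Nontrivial (EuclideanSpace ℝ (Fin d)) :=
    nontrivial_of_ne (EuclideanSpace.single ⟨0, hd⟩ (1:ℝ)) 0 (by
      intro h
      have := congrArg (fun f => f ⟨0, hd⟩) h
      simp [EuclideanSpace.single_apply] at this)
  have hball : ∀ (c : EuclideanSpace ℝ (Fin d)) (R : ℝ), 0 ≤ R →
      volume (Metric.ball c R)
        = ENNReal.ofReal (R ^ d) * volume (Metric.ball (0 : EuclideanSpace ℝ (Fin d)) 1) := by
    intro c R hR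
    rw [MeasureTheory.Measure.addHaar_ball volume c hR, finrank_euclideanSpace_fin]
  have hdisj : Pairwise (Function.onFun Disjoint (fun k => Metric.ball (ψ (w k)) (θ/2))) := by
    intro k k' hne
    exact Metric.ball_disjoint_ball (by linarith [hwsep k k' hne])
  have hmeas := measure_iUnion (μ := volume) hdisj (fun k => measurableSet_ball)
  have hsub : (⋃ k, Metric.ball (ψ (w k)) (θ/2)) ⊆ Metric.ball (ψ p) (D + θ) := by
    apply Set.iUnion_subset; intro k z hz
    rw [mem_ball] at hz ⊢
    have h1 : dist (ψ (w k)) (ψ p) ≤ D :=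
      Metric.dist_le_diam_of_mem hQb (hψQ _ (hwΛ k)) (hψQ p hp)
    calc dist z (ψ p) ≤ dist z (ψ (w k)) + dist (ψ (w k)) (ψ p) := dist_triangle _ _ _
    _ < θ/2 + D := by linarith
    _ ≤ D + θ := by linarith
  have hμU : ((m^d : ℕ) : ℝ≥0∞) * (ENNReal.ofReal ((θ/2)^d)
        * volume (Metric.ball (0 : EuclideanSpace ℝ (Fin d)) 1))
      ≤ ENNReal.ofReal ((D+θ)^d) * volume (Metric.ball (0 : EuclideanSpace ℝ (Fin d)) 1) := by
    calc ((m^d : ℕ) : ℝ≥0∞) * (ENNReal.ofReal ((θ/2)^d)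
          * volume (Metric.ball (0 : EuclideanSpace ℝ (Fin d)) 1))
        = ∑' k : Fin d → Fin m, volume (Metric.ball (ψ (w k)) (θ/2)) := by
          rw [tsum_fintype]
          have : ∀ k : Fin d → Fin m, volume (Metric.ball (ψ (w k)) (θ/2))
              = ENNReal.ofReal ((θ/2)^d) * volume (Metric.ball (0 : EuclideanSpace ℝ (Fin d)) 1) :=
            fun k => hball _ _ (by positivity)
          rw [Finset.sum_congr rfl (fun k _ => this k), Finset.sum_const, Finset.card_univ,
            nsmul_eq_mul]
          congr 1
          simp
      _ = volume (⋃ k, Metric.ball (ψ (w k)) (θ/2)) := hmeas.symm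
      _ ≤ volume (Metric.ball (ψ p) (D + θ)) := measure_mono hsub
      _ = ENNReal.ofReal ((D+θ)^d) * volume (Metric.ball (0 : EuclideanSpace ℝ (Fin d)) 1) :=
          hball _ _ (by positivity)
  have hB0 : volume (Metric.ball (0 : EuclideanSpace ℝ (Fin d)) 1) ≠ 0 :=
    (measure_ball_pos volume _ one_pos).ne'
  have hBt : volume (Metric.ball (0 : EuclideanSpace ℝ (Fin d)) 1) ≠ ⊤ :=
    measure_ball_lt_top.ne
  rw [← mul_assoc] at hμU
  have hμU2 := (ENNReal.mul_le_mul_iff_left hB0 hBt).mp hμU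
  have hreal : ((m:ℝ))^d * (θ/2)^d ≤ (D+θ)^d := by
    have h1 : ((m^d : ℕ) : ℝ≥0∞) = ENNReal.ofReal (((m:ℝ))^d) := by
      rw [show (((m:ℝ))^d) = ((m^d : ℕ) : ℝ) by push_cast; ring, ENNReal.ofReal_natCast]
    rw [h1, ← ENNReal.ofReal_mul (by positivity)] at hμU2
    exact (ENNReal.ofReal_le_ofReal_iff (by positivity)).mp hμU2
  have hroot : (m:ℝ) * (θ/2) ≤ D + θ := by
    apply le_of_pow_le_pow_left₀ hd.ne' (by positivity)
    rw [mul_pow]; exact hreal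
  rw [le_div_iff₀ hr]
  have hkey : (m:ℝ) * θ ≤ 4 * D := by nlinarith
  nlinarith [mul_le_mul_of_nonneg_left hmge hθ0, mul_le_mul_of_nonneg_left hkey (by positivity : (0:ℝ) ≤ 8*s*((d:ℝ)+1))]


theorem stmt19_main (d : ℕ)
    (lip : ∀ (v : EuclideanSpace ℝ (Fin d)) (r ε s : ℝ)
      (Λ Q : Set (EuclideanSpace ℝ (Fin d)))
      (ψ : EuclideanSpace ℝ (Fin d) → EuclideanSpace ℝ (Fin d)),
      0 < r → 0 ≤ ε →
      (∀ y ∈ Metric.ball v r, ∃ x ∈ Λ, dist y x ≤ ε) →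
      Bornology.IsBounded Q → (∀ x ∈ Λ, ψ x ∈ Q) →
      (∀ a ∈ Λ, ∀ b ∈ Λ, ∀ a' ∈ Λ, ∀ b' ∈ Λ,
        ‖a - b‖ < ‖a' - b'‖ → ‖ψ a - ψ b‖ ≤ ‖ψ a' - ψ b'‖) →
      ∀ p ∈ Λ, ∀ q ∈ Λ, ∀ s : ℝ, 0 < s → dist p q < 2*s - 2*ε →
        dist (ψ p) (ψ q) ≤ 32 * ((d:ℝ)+1) * Metric.diam Q * s / r) :
    ∀ (v : EuclideanSpace ℝ (Fin d)) (r ε : ℝ)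
        (Λ Q : Set (EuclideanSpace ℝ (Fin d)))
        (ψ : EuclideanSpace ℝ (Fin d) → EuclideanSpace ℝ (Fin d)),
        0 < r → 0 ≤ ε → Λ ⊆ Metric.ball v r →
        (∀ y ∈ Metric.ball v r, ∃ x ∈ Λ, dist y x ≤ ε) →
        Bornology.IsBounded Q → (∀ x ∈ Λ, ψ x ∈ Q) →
        (∀ a ∈ Λ, ∀ b ∈ Λ, ∀ a' ∈ Λ, ∀ b' ∈ Λ,
          ‖a - b‖ < ‖a' - b'‖ → ‖ψ a - ψ b‖ ≤ ‖ψ a' - ψ b'‖) →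
        ∀ x ∈ Λ ∩ Metric.ball v (3 * r / 4), ∀ x' ∈ Λ ∩ Metric.ball v (3 * r / 4),
        ∀ xd ∈ Λ, ∀ xdd ∈ Λ, ∀ η : ℝ, 0 < η → η < r / 4 - 2 * ε →
          |‖x - x'‖ - ‖xd - xdd‖| ≤ η →
          |‖ψ x - ψ x'‖ - ‖ψ xd - ψ xdd‖| ≤ (1000 * ((d:ℝ)+1)) * (Metric.diam Q / r) * (η + ε) := by
  intro v r ε Λ Q ψ hr hε hΛsub hcov hQb hψQ hiso x hx x' hx' xd hxd xdd hxdd η hη hηr hclose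
  obtain ⟨hxΛ, hxb⟩ := hx
  obtain ⟨hx'Λ, hx'b⟩ := hx'
  have hD0 : 0 ≤ Metric.diam Q := Metric.diam_nonneg
  set D := Metric.diam Q with hD
  -- gamma
  set γ := min η (r / 4 - 2 * ε - η) / 2 with hγ
  have hγ0 : 0 < γ := by
    have : 0 < min η (r / 4 - 2 * ε - η) := lt_min hη (by linarith)
    positivity
  have hγη : γ ≤ η / 2 := by
    have : min η (r / 4 - 2 * ε - η) ≤ η := min_le_left _ _
    rw [hγ]; linarith
  have hγr : γ ≤ (r / 4 - 2 * ε - η) / 2 := by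
    have : min η (r / 4 - 2 * ε - η) ≤ r / 4 - 2 * ε - η := min_le_right _ _
    rw [hγ]; linarith
  set δ' := η + 2 * ε + γ with hδ'
  have hδ'pos : 0 < δ' := by rw [hδ']; positivity
  have hδ'r : δ' < r / 4 := by rw [hδ']; linarith
  -- Lipschitz-type corollary
  have lipb : ∀ p ∈ Λ, ∀ q ∈ Λ,
      dist (ψ p) (ψ q) ≤ 32 * ((d:ℝ)+1) * D * (dist p q + 2 * ε + γ) / r := by
    intro p hp q hq
    exact lip v r ε (dist p q + 2 * ε + γ) Λ Q ψ hr hε hcov hQb hψQ hiso p hp q hq _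
      (by have := dist_nonneg (x := p) (y := q); positivity)
      (by have := dist_nonneg (x := p) (y := q); linarith)
  -- final arithmetic helper
  have hfin : ∀ t : ℝ, 0 ≤ t → t ≤ 5 * (η + ε) →
      32 * ((d:ℝ)+1) * D * t / r ≤ (1000 * ((d:ℝ)+1)) * (D / r) * (η + ε) := by
    intro t ht0 ht5
    have hdr : 0 ≤ D / r := div_nonneg hD0 hr.le
    have hd0 : (0:ℝ) ≤ (d:ℝ) + 1 := by positivity
    have key : (1000 * ((d:ℝ)+1)) * (D / r) * (η + ε) - 32 * ((d:ℝ)+1) * D * t / r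
        = ((d:ℝ)+1) * (D / r) * (1000 * (η + ε) - 32 * t) := by
      field_simp
    nlinarith [mul_nonneg (mul_nonneg hd0 hdr) (by linarith : (0:ℝ) ≤ 1000 * (η + ε) - 32 * t)]
  -- distances
  set ρ := dist x x' with hρ
  set τ := dist xd xdd with hτ
  have hρ0 : 0 ≤ ρ := dist_nonneg
  have hτ0 : 0 ≤ τ := dist_nonneg
  have hclose' : |ρ - τ| ≤ η := by
    rw [hρ, hτ, dist_eq_norm, dist_eq_norm]; exact hclose
  obtain ⟨hτ1, hτ2⟩ := abs_sub_le_iff.mp hclose'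
  -- hτ1 : ρ - τ ≤ η, hτ2 : τ - ρ ≤ η
  have goal' : |dist (ψ x) (ψ x') - dist (ψ xd) (ψ xdd)| ≤
      (1000 * ((d:ℝ)+1)) * (D / r) * (η + ε) := by
    set A := dist (ψ x) (ψ x') with hA
    set B := dist (ψ xd) (ψ xdd) with hB
    have hA0 : 0 ≤ A := dist_nonneg
    have hB0 : 0 ≤ B := dist_nonneg
    rw [abs_sub_le_iff]
    constructor
    · -- A - B ≤ bound
      by_cases hcase : ρ < δ'
      · -- A itself is small
        have h1 : A ≤ 32 * ((d:ℝ)+1) * D * (ρ + 2 * ε + γ) / r := lipb x hxΛ x' hx'Λ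
        have h2 : 32 * ((d:ℝ)+1) * D * (ρ + 2 * ε + γ) / r
            ≤ (1000 * ((d:ℝ)+1)) * (D / r) * (η + ε) := by
          apply hfin _ (by positivity)
          linarith [hδ', hγη]
        linarith
      · push_neg at hcase   -- δ' ≤ ρ
        have hρpos : 0 < ρ := lt_of_lt_of_le hδ'pos hcase
        set w : EuclideanSpace ℝ (Fin d) := x' - x with hw
        have hwn : ‖w‖ = ρ := by rw [hw, norm_sub_rev, hρ, dist_eq_norm]
        set c := δ' * ρ⁻¹ with hc
        have hc0 : 0 < c := by rw [hc]; positivity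
        have hc1 : c ≤ 1 := by
          rw [hc, ← div_eq_mul_inv, div_le_one hρpos]; exact hcase
        set ym := x' - c • w with hym
        have hxym : dist x ym = ρ - δ' := by
          have e1 : x - ym = (c - 1) • w := by
            rw [hym, sub_smul, one_smul, hw]; abel
          rw [dist_eq_norm, e1, norm_smul, Real.norm_eq_abs, hwn,
            abs_of_nonpos (by linarith), hc]
          field_simp
          ring
        have hymx' : dist ym x' = δ' := by
          have e1 : ym - x' = -(c • w) := by rw [hym]; abel
          rw [dist_eq_norm, e1, norm_neg, norm_smul, Real.norm_eq_abs, hwn,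
            abs_of_pos hc0, hc]
          field_simp
        have hymmem : ym ∈ Metric.ball v r := by
          rw [mem_ball]
          have t1 : dist ym v ≤ dist ym x' + dist x' v := dist_triangle _ _ _
          have t2 : dist x' v < 3 * r / 4 := mem_ball.mp hx'b
          rw [hymx'] at t1; linarith
        obtain ⟨z, hzΛ, hzd⟩ := hcov ym hymmem
        have hzd' : dist ym z ≤ ε := hzd
        have hxz : dist x z < τ := by
          have t1 : dist x z ≤ dist x ym + dist ym z := dist_triangle _ _ _
          rw [hxym] at t1
          linarith [hδ', hγ0, hτ1]
        have hiso1 : dist (ψ x) (ψ z) ≤ B := by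
          have := hiso x hxΛ z hzΛ xd hxd xdd hxdd
            (by rw [← dist_eq_norm, ← dist_eq_norm]; exact hxz)
          rw [← dist_eq_norm, ← dist_eq_norm] at this
          exact this
        have hzx' : dist z x' ≤ δ' + ε := by
          have t1 : dist z x' ≤ dist z ym + dist ym x' := dist_triangle _ _ _
          rw [hymx'] at t1
          have t3 : dist z ym ≤ ε := by rw [dist_comm]; exact hzd'
          linarith
        have h1 : A ≤ dist (ψ x) (ψ z) + dist (ψ z) (ψ x') := dist_triangle _ _ _
        have h2 : dist (ψ z) (ψ x') ≤ 32 * ((d:ℝ)+1) * D * (dist z x' + 2 * ε + γ) / r :=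
          lipb z hzΛ x' hx'Λ
        have h3 : 32 * ((d:ℝ)+1) * D * (dist z x' + 2 * ε + γ) / r
            ≤ (1000 * ((d:ℝ)+1)) * (D / r) * (η + ε) := by
          apply hfin _ (by positivity)
          linarith [hzx', hγη, hδ', hε, hη]
        linarith
    · -- B - A ≤ bound
      by_cases hρz : ρ = 0
      · have hτη : τ ≤ η := by linarith [hτ2, hρz.ge, hρz.le]
        have h1 : B ≤ 32 * ((d:ℝ)+1) * D * (τ + 2 * ε + γ) / r := lipb xd hxd xdd hxdd
        have h2 : 32 * ((d:ℝ)+1) * D * (τ + 2 * ε + γ) / r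
            ≤ (1000 * ((d:ℝ)+1)) * (D / r) * (η + ε) := by
          apply hfin _ (by positivity)
          linarith [hγη]
        linarith
      · have hρpos : 0 < ρ := lt_of_le_of_ne hρ0 (Ne.symm hρz)
        set w : EuclideanSpace ℝ (Fin d) := x' - x with hw
        have hwn : ‖w‖ = ρ := by rw [hw, norm_sub_rev, hρ, dist_eq_norm]
        set c := δ' * ρ⁻¹ with hc
        have hc0 : 0 < c := by rw [hc]; positivity
        set yp := x' + c • w with hyp
        have hxyp : dist x yp = ρ + δ' := by
          have e1 : x - yp = -((1 + c) • w) := by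
            rw [hyp, add_smul, one_smul, hw]; abel
          rw [dist_eq_norm, e1, norm_neg, norm_smul, Real.norm_eq_abs, hwn,
            abs_of_pos (by linarith), hc]
          field_simp
        have hypx' : dist yp x' = δ' := by
          have e1 : yp - x' = c • w := by rw [hyp]; abel
          rw [dist_eq_norm, e1, norm_smul, Real.norm_eq_abs, hwn,
            abs_of_pos hc0, hc]
          field_simp
        have hypmem : yp ∈ Metric.ball v r := by
          rw [mem_ball]
          have t1 : dist yp v ≤ dist yp x' + dist x' v := dist_triangle _ _ _
          have t2 : dist x' v < 3 * r / 4 := mem_ball.mp hx'b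
          rw [hypx'] at t1; linarith
        obtain ⟨z, hzΛ, hzd⟩ := hcov yp hypmem
        have hxz : τ < dist x z := by
          have t1 : dist x yp ≤ dist x z + dist z yp := dist_triangle _ _ _
          rw [hxyp] at t1
          have t3 : dist z yp ≤ ε := by rw [dist_comm]; exact hzd
          linarith [hδ', hγ0, hτ2]
        have hiso1 : B ≤ dist (ψ x) (ψ z) := by
          have := hiso xd hxd xdd hxdd x hxΛ z hzΛ
            (by rw [← dist_eq_norm, ← dist_eq_norm]; exact hxz)
          rw [← dist_eq_norm, ← dist_eq_norm] at this
          exact this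
        have hzx' : dist x' z ≤ δ' + ε := by
          have t1 : dist x' z ≤ dist x' yp + dist yp z := dist_triangle _ _ _
          have t3 : dist x' yp = δ' := by rw [dist_comm]; exact hypx'
          rw [t3] at t1
          linarith
        have h1 : dist (ψ x) (ψ z) ≤ A + dist (ψ x') (ψ z) := by
          have t1 := dist_triangle (ψ x) (ψ x') (ψ z)
          rw [← hA] at t1
          exact t1
        have h2 : dist (ψ x') (ψ z) ≤ 32 * ((d:ℝ)+1) * D * (dist x' z + 2 * ε + γ) / r :=
          lipb x' hx'Λ z hzΛ
        have h3 : 32 * ((d:ℝ)+1) * D * (dist x' z + 2 * ε + γ) / r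
            ≤ (1000 * ((d:ℝ)+1)) * (D / r) * (η + ε) := by
          apply hfin _ (by positivity)
          linarith [hzx', hγη, hε, hη]
        linarith
  rw [dist_eq_norm, dist_eq_norm] at goal'
  exact goal'

/-- Approximate isosceles preservation for isotonic maps on a ball: if two
pairs of points have nearly equal distances, their images under an isotonic map
have nearly equal distances, with constant proportional to `diam Q / r`. -/
theorem stmt19 (d : ℕ) :
    ∃ K : ℝ, 0 < K ∧
      ∀ (v : EuclideanSpace ℝ (Fin d)) (r ε : ℝ)
        (Λ Q : Set (EuclideanSpace ℝ (Fin d)))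
        (ψ : EuclideanSpace ℝ (Fin d) → EuclideanSpace ℝ (Fin d)),
        0 < r → 0 ≤ ε → Λ ⊆ Metric.ball v r →
        (∀ y ∈ Metric.ball v r, ∃ x ∈ Λ, dist y x ≤ ε) →
        Bornology.IsBounded Q → (∀ x ∈ Λ, ψ x ∈ Q) →
        (∀ a ∈ Λ, ∀ b ∈ Λ, ∀ a' ∈ Λ, ∀ b' ∈ Λ,
          ‖a - b‖ < ‖a' - b'‖ → ‖ψ a - ψ b‖ ≤ ‖ψ a' - ψ b'‖) →
        ∀ x ∈ Λ ∩ Metric.ball v (3 * r / 4), ∀ x' ∈ Λ ∩ Metric.ball v (3 * r / 4),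
        ∀ xd ∈ Λ, ∀ xdd ∈ Λ, ∀ η : ℝ, 0 < η → η < r / 4 - 2 * ε →
          |‖x - x'‖ - ‖xd - xdd‖| ≤ η →
          |‖ψ x - ψ x'‖ - ‖ψ xd - ψ xdd‖| ≤ K * (Metric.diam Q / r) * (η + ε) := by
  refine ⟨1000 * ((d:ℝ) + 1), by positivity, ?_⟩
  rcases Nat.eq_zero_or_pos d with rfl | hd
  · intro v r ε Λ Q ψ hr hε _ _ hQb _ _ x _ x' _ xd _ xdd _ η hη hηr _
    have hz : ∀ z : EuclideanSpace ℝ (Fin 0), ‖z‖ = 0 := fun z => by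
      rw [EuclideanSpace.norm_eq]; simp
    have h1 : |‖ψ x - ψ x'‖ - ‖ψ xd - ψ xdd‖| = 0 := by rw [hz, hz]; simp
    rw [h1]
    have h2 : (0:ℝ) ≤ Metric.diam Q / r := div_nonneg Metric.diam_nonneg hr.le
    apply mul_nonneg (mul_nonneg (by positivity) h2) (by linarith)
  · exact stmt19_main d
      (fun v r ε s Λ Q ψ hr hε hcov hQb hψQ hiso p hp q hq s' hs' hpq =>
        stmt19_lip d hd v r ε s' Λ Q ψ hr hε hcov hQb hψQ hiso p q hp hq hs' hpq)
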